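/- arXiv:2005.08303 — 3 statements merged into one kernel-verified Lean document; each statement's English description precedes it below -/
import Mathlib

section
/- Let (R, m) be a commutative local ring and let a_• and b_• be two decreasing graded sequences of m-primary ideals of R (so a_i · a_j ⊆ a_{i+j}, a_{i+1} ⊆ a_i, and each a_i contains a power of m; similarly for b_•). Fix m ∈ ℕ and suppose R/a_m is a finite-dimensional vector space over the residue field k = R/m. Then there exist f_1, ..., f_N ∈ R whose images in R/a_m form a k-basis, such that the family {f_1,...,f_N} is compatible with both a_• and b_•: for every r ∈ ℕ, the nonzero images of the f_i in R/a_r are linearly independent over k. -/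
section AuxCompatibleBasis
open Module Submodule

private lemma nat_max_gadget {p : ℕ → Prop} (hp : ∀ {i j : ℕ}, i ≤ j → p j → p i)
    (h0 : p 0) (hM : ∃ M, ¬ p M) : ∃ i, p i ∧ ∀ r, p r → r ≤ i := by
  classical
  have hex : ∃ r, ¬ p r := hM
  let r₁ := Nat.find hex
  have hr₁ : ¬ p r₁ := Nat.find_spec hex
  have hr₁pos : 0 < r₁ := by
    rcases Nat.eq_zero_or_pos r₁ with h | h
    · exact absurd (h ▸ h0) hr₁
    · exact h
  refine ⟨r₁ - 1, ?_, ?_⟩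
  · by_contra hnp
    exact (Nat.find_min hex (by omega)) hnp
  · intro r hr
    by_contra hgt
    exact hr₁ (hp (by omega) hr)

private lemma indep_helper {K V W ι : Type*} [Field K] [AddCommGroup V] [Module K V]
    [AddCommGroup W] [Module K W] (bas : Basis ι K V) (φ : V →ₗ[K] W)
    (h : LinearMap.ker φ ≤ Submodule.span K (↑bas '' {k | bas k ∈ LinearMap.ker φ})) :
    LinearIndependent K (fun i : {i : ι // φ (bas i) ≠ 0} => φ (bas i.1)) := by
  classical
  rw [linearIndependent_iff']
  intro t g hsum i₀ hi₀
  set x := ∑ i ∈ t, g i • bas i.1 with hx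
  have hxker : x ∈ LinearMap.ker φ := by
    rw [LinearMap.mem_ker, hx, map_sum]
    simpa [map_smul] using hsum
  have hsupp : ↑(bas.repr x).support ⊆ {k | bas k ∈ LinearMap.ker φ} :=
    bas.mem_span_image.mp (h hxker)
  have hrepr : (bas.repr x) i₀.1 = g i₀ := by
    rw [hx, map_sum, Finsupp.finset_sum_apply]
    rw [Finset.sum_eq_single_of_mem i₀ hi₀]
    · simp [Basis.repr_self]
    · intro i _ hne
      have : (i : ι) ≠ i₀.1 := fun hc => hne (Subtype.ext hc)
      simp [Basis.repr_self, Finsupp.single_apply, this]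
  by_contra hg
  have : i₀.1 ∈ (bas.repr x).support := by
    rw [Finsupp.mem_support_iff, hrepr]; exact hg
  exact i₀.2 (hsupp this)

universe u v

private lemma core_aux (K : Type v) [Field K] (n : ℕ) :
    ∀ (V : Type u) (_ : AddCommGroup V) (_ : Module K V) (_ : FiniteDimensional K V),
      finrank K V = n →
      ∀ F G : ℕ → Submodule K V, Antitone F → Antitone G →
        F 0 = ⊤ → G 0 = ⊤ →
        (∃ M, ∀ r, M ≤ r → F r = ⊥) → (∃ M, ∀ r, M ≤ r → G r = ⊥) →
        ∃ (N : ℕ) (bas : Basis (Fin N) K V),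
          (∀ r, F r ≤ Submodule.span K (↑bas '' {k | bas k ∈ F r})) ∧
          (∀ r, G r ≤ Submodule.span K (↑bas '' {k | bas k ∈ G r})) := by
  induction n using Nat.strong_induction_on with
  | _ n IH =>
  intro V _ _ _ hrank F G hFa hGa hF0 hG0 hFM hGM
  classical
  rcases Nat.eq_zero_or_pos n with h0 | hpos
  · subst h0
    haveI : Subsingleton V := finrank_zero_iff.mp hrank
    refine ⟨0, Basis.empty V, ?_, ?_⟩ <;>
    · intro r y _
      have : y = (0 : V) := Subsingleton.elim _ _
      simp [this]
  · haveI : Nontrivial V := by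
      rw [← Module.finrank_pos_iff (R := K)]; omega
    obtain ⟨i, hFi, hFimax⟩ : ∃ i, F i ≠ ⊥ ∧ ∀ r, F r ≠ ⊥ → r ≤ i := by
      refine nat_max_gadget (fun {p q} hpq h hbot => h ?_) (by simp [hF0]) ?_
      · exact le_bot_iff.mp (hbot ▸ hFa hpq)
      · obtain ⟨M, hM⟩ := hFM
        exact ⟨M, by simp [hM M le_rfl]⟩
    obtain ⟨x, hxFi, hx0⟩ := (Submodule.ne_bot_iff _).mp hFi
    set X : Submodule K V := Submodule.span K {x} with hX
    set q : V →ₗ[K] V ⧸ X := X.mkQ with hq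
    have hrkQ : finrank K (V ⧸ X) < n := by
      have h1 := Submodule.finrank_quotient_add_finrank X
      have h2 : finrank K X = 1 := finrank_span_singleton hx0
      omega
    obtain ⟨N', bas', hFad', hGad'⟩ :=
      IH _ hrkQ (V ⧸ X) inferInstance inferInstance inferInstance rfl
        (fun r => Submodule.map q (F r)) (fun r => Submodule.map q (G r))
        (fun _ _ h => Submodule.map_mono (hFa h)) (fun _ _ h => Submodule.map_mono (hGa h))
        (by show Submodule.map q (F 0) = ⊤; rw [hF0, Submodule.map_top, Submodule.range_mkQ])
        (by show Submodule.map q (G 0) = ⊤; rw [hG0, Submodule.map_top, Submodule.range_mkQ])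
        (by obtain ⟨M, hM⟩ := hFM
            exact ⟨M, fun r hr => by show Submodule.map q (F r) = ⊥
                                     rw [hM r hr, Submodule.map_bot]⟩)
        (by obtain ⟨M, hM⟩ := hGM
            exact ⟨M, fun r hr => by show Submodule.map q (G r) = ⊥
                                     rw [hM r hr, Submodule.map_bot]⟩)
    have hlift : ∀ k : Fin N', ∃ y : V, q y = bas' k ∧
        (∀ r, bas' k ∈ Submodule.map q (F r) → y ∈ F r) ∧
        (∀ r, bas' k ∈ Submodule.map q (G r) → y ∈ G r) := by
      intro k
      have hbk0 : bas' k ≠ 0 := bas'.ne_zero k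
      obtain ⟨r₀, hr₀mem, hr₀max⟩ :
          ∃ r₀, bas' k ∈ Submodule.map q (F r₀) ∧
            ∀ r, bas' k ∈ Submodule.map q (F r) → r ≤ r₀ := by
        refine nat_max_gadget (fun {p q'} hpq h => Submodule.map_mono (hFa hpq) h) ?_ ?_
        · rw [hF0, Submodule.map_top, Submodule.range_mkQ]; trivial
        · obtain ⟨M, hM⟩ := hFM
          exact ⟨M, by rw [hM M le_rfl, Submodule.map_bot]; simpa using hbk0⟩
      obtain ⟨s₀, hs₀mem, hs₀max⟩ :
          ∃ s₀, bas' k ∈ Submodule.map q (G s₀) ∧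
            ∀ r, bas' k ∈ Submodule.map q (G r) → r ≤ s₀ := by
        refine nat_max_gadget (fun {p q'} hpq h => Submodule.map_mono (hGa hpq) h) ?_ ?_
        · rw [hG0, Submodule.map_top, Submodule.range_mkQ]; trivial
        · obtain ⟨M, hM⟩ := hGM
          exact ⟨M, by rw [hM M le_rfl, Submodule.map_bot]; simpa using hbk0⟩
      obtain ⟨f, hfF, hfq⟩ := hr₀mem
      obtain ⟨g, hgG, hgq⟩ := hs₀mem
      have hker : f - g ∈ X := by
        have : q (f - g) = 0 := by rw [map_sub, hfq, hgq, sub_self]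
        rwa [← Submodule.ker_mkQ X, LinearMap.mem_ker]
      obtain ⟨γ, hγ⟩ := Submodule.mem_span_singleton.mp hker
      have hFr₀ : F r₀ ≠ ⊥ := by
        intro hbot
        rw [hbot] at hfF
        have hf0 : f = 0 := by simpa using hfF
        exact hbk0 (by rw [← hfq, hf0, map_zero])
      have hxF : x ∈ F r₀ := hFa (hFimax _ hFr₀) hxFi
      refine ⟨g, hgq, ?_, fun r hmem => hGa (hs₀max r hmem) hgG⟩
      intro r hmem
      have hg : g = f - γ • x := by rw [hγ]; abel
      exact hFa (hr₀max r hmem)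
        (by rw [hg]; exact sub_mem hfF (Submodule.smul_mem _ _ hxF))
    choose v hv1 hv2 hv3 using hlift
    have hqv : ⇑q ∘ v = ⇑bas' := funext hv1
    have hvli : LinearIndependent K v :=
      LinearIndependent.of_comp q (by rw [hqv]; exact bas'.linearIndependent)
    have hxnot : x ∉ Submodule.span K (Set.range v) := by
      intro hx
      obtain ⟨c, hc⟩ := (mem_span_range_iff_exists_fun K).mp hx
      have hz : ∑ k, c k • bas' k = 0 := by
        have : q (∑ k, c k • v k) = q x := by rw [hc]
        have hqx : q x = 0 := by
          rw [hq, Submodule.mkQ_apply, Submodule.Quotient.mk_eq_zero]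
          exact Submodule.mem_span_singleton_self x
        rw [hqx, map_sum] at this
        simpa [map_smul, hv1] using this
      have hc0 : ∀ k, c k = 0 := Fintype.linearIndependent_iff.mp bas'.linearIndependent c hz
      exact hx0 (by rw [← hc]; simp [hc0])
    set w : Fin (N' + 1) → V := Fin.cons x v with hw
    have hwli : LinearIndependent K w := hvli.fin_cons hxnot
    have hspan : ⊤ ≤ Submodule.span K (Set.range w) := by
      intro y _
      have hyq : q y ∈ Submodule.span K (Set.range ⇑bas') := by
        rw [bas'.span_eq]; trivial
      obtain ⟨c, hc⟩ := (mem_span_range_iff_exists_fun K).mp hyq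
      have hqz : q (y - ∑ k, c k • v k) = 0 := by
        rw [map_sub, map_sum]
        simp only [map_smul, hv1]
        rw [hc, sub_self]
      have hmem : y - ∑ k, c k • v k ∈ X := by
        rwa [← Submodule.ker_mkQ X, LinearMap.mem_ker]
      obtain ⟨γ, hγ⟩ := Submodule.mem_span_singleton.mp hmem
      have hsplit : y = γ • x + ∑ k, c k • v k := by rw [hγ]; abel
      rw [hsplit]
      refine add_mem (Submodule.smul_mem _ _ ?_)
        (sum_mem fun k _ => Submodule.smul_mem _ _ ?_)
      · exact Submodule.subset_span ⟨0, by simp [hw]⟩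
      · exact Submodule.subset_span ⟨k.succ, by simp [hw]⟩
    set bas : Basis (Fin (N' + 1)) K V := Basis.mk hwli hspan with hbas
    have hbas0 : bas 0 = x := by rw [hbas, Basis.coe_mk, hw, Fin.cons_zero]
    have hbass : ∀ k : Fin N', bas k.succ = v k := by
      intro k; rw [hbas, Basis.coe_mk, hw, Fin.cons_succ]
    have key : ∀ (F' : ℕ → Submodule K V),
        (∀ k r, bas' k ∈ Submodule.map q (F' r) → v k ∈ F' r) →
        (∀ r, Submodule.map q (F' r) ≤
          Submodule.span K (↑bas' '' {k | bas' k ∈ Submodule.map q (F' r)})) →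
        ∀ r, F' r ≤ Submodule.span K (↑bas '' {k | bas k ∈ F' r}) := by
      intro F' hv' had' r y hy
      set S : Set (Fin N') := {k | bas' k ∈ Submodule.map q (F' r)} with hS
      have h1 : q y ∈ Submodule.span K (↑bas' '' S) :=
        had' r (Submodule.mem_map_of_mem hy)
      rw [Set.image_eq_range] at h1
      obtain ⟨c, hc⟩ := (mem_span_range_iff_exists_fun K).mp h1
      set z : V := ∑ k : S, c k • v k.1 with hz
      have hzF : z ∈ F' r := sum_mem fun k _ => Submodule.smul_mem _ _ (hv' _ _ k.2)
      have hqz : q (y - z) = 0 := by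
        rw [map_sub, hz, map_sum]
        simp only [map_smul, hv1]
        rw [hc, sub_self]
      have hmem : y - z ∈ X := by rwa [← Submodule.ker_mkQ X, LinearMap.mem_ker]
      obtain ⟨γ, hγ⟩ := Submodule.mem_span_singleton.mp hmem
      have hγx : γ • x ∈ F' r := hγ ▸ sub_mem hy hzF
      have hsplit : y = γ • x + z := by rw [hγ]; abel
      rw [hsplit]
      refine add_mem ?_ (sum_mem fun k _ => Submodule.smul_mem _ _
        (Submodule.subset_span ⟨k.1.succ,
          by simp only [Set.mem_setOf_eq, hbass]; exact hv' _ _ k.2, hbass k.1⟩))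
      rcases eq_or_ne γ 0 with h | h
      · simp [h]
      · have hxmem : x ∈ F' r := by
          have := Submodule.smul_mem (F' r) γ⁻¹ hγx
          rwa [smul_smul, inv_mul_cancel₀ h, one_smul] at this
        exact Submodule.smul_mem _ _
          (Submodule.subset_span ⟨0, by simp only [Set.mem_setOf_eq, hbas0]; exact hxmem, hbas0⟩)
    exact ⟨N' + 1, bas, key F hv2 hFad', key G hv3 hGad'⟩


end AuxCompatibleBasis

open Module

/-- Lemma 2.1: given two decreasing graded sequences of m-primary ideals in a local
algebra over a field `K` (the coefficient field, isomorphic to the residue field),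
there is a basis of `R/a_{m₀}` compatible with both sequences, i.e. lifts `f i` whose
nonzero images in every `R/a_r` and `R/b_r` are linearly independent. -/
theorem compatible_basis_two_graded_sequences
    (K R : Type*) [Field K] [CommRing R] [Algebra K R] [IsLocalRing R]
    (hres : Function.Bijective (algebraMap K (R ⧸ IsLocalRing.maximalIdeal R)))
    (a b : ℕ → Ideal R)
    (ha0 : a 0 = ⊤) (hb0 : b 0 = ⊤)
    (hagr : ∀ i j, a i * a j ≤ a (i + j)) (hbgr : ∀ i j, b i * b j ≤ b (i + j))
    (hadec : ∀ i, a (i + 1) ≤ a i) (hbdec : ∀ i, b (i + 1) ≤ b i)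
    (haprim : ∀ i, ∃ p : ℕ, (IsLocalRing.maximalIdeal R) ^ p ≤ a i)
    (hbprim : ∀ i, ∃ p : ℕ, (IsLocalRing.maximalIdeal R) ^ p ≤ b i)
    (m₀ : ℕ) [FiniteDimensional K (R ⧸ a m₀)] :
    ∃ (N : ℕ) (f : Fin N → R)
      (bas : Basis (Fin N) K (R ⧸ a m₀)),
      (∀ i, bas i = Ideal.Quotient.mk (a m₀) (f i)) ∧
      (∀ r : ℕ, LinearIndependent K
        (fun i : {i : Fin N // Ideal.Quotient.mk (a r) (f i) ≠ 0} =>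
          Ideal.Quotient.mk (a r) (f i.1))) ∧
      (∀ r : ℕ, LinearIndependent K
        (fun i : {i : Fin N // Ideal.Quotient.mk (b r) (f i) ≠ 0} =>
          Ideal.Quotient.mk (b r) (f i.1))) := by
  classical
  set V := R ⧸ a m₀ with hV
  set π : R →ₗ[K] V := (Ideal.Quotient.mkₐ K (a m₀)).toLinearMap with hπ
  have hπapp : ∀ x : R, π x = Ideal.Quotient.mk (a m₀) x := fun x => rfl
  -- a linear section of the quotient map
  obtain ⟨sec, hsec⟩ : ∃ sec : V →ₗ[K] R, ∀ v, π (sec v) = v := by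
    have hsurj : ∀ v : V, ∃ r : R, π r = v := fun v => Ideal.Quotient.mk_surjective v
    choose pre hpre using hsurj
    let B0 := Module.finBasis K V
    refine ⟨B0.constr K (fun k => pre (B0 k)), ?_⟩
    have : (π ∘ₗ B0.constr K (fun k => pre (B0 k))) = LinearMap.id := by
      apply B0.ext
      intro k
      simp [Basis.constr_basis, hpre]
    intro v
    calc π ((B0.constr K fun k => pre (B0 k)) v)
        = (π ∘ₗ B0.constr K (fun k => pre (B0 k))) v := rfl
      _ = v := by rw [this]; rfl
  have hsecinj : Function.Injective sec := by
    intro u w h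
    have := congrArg π h
    rwa [hsec, hsec] at this
  -- the two chains in V
  set Fc : ℕ → Submodule K V := fun r => (Submodule.restrictScalars K (a r)).comap sec with hFc
  set Gc : ℕ → Submodule K V := fun r => (Submodule.restrictScalars K (b r)).comap sec with hGc
  have hFmem : ∀ r (v : V), v ∈ Fc r ↔ sec v ∈ a r := fun r v => Iff.rfl
  have hGmem : ∀ r (v : V), v ∈ Gc r ↔ sec v ∈ b r := fun r v => Iff.rfl
  have hFanti : Antitone Fc := antitone_nat_of_succ_le fun n v hv => hadec n hv
  have hGanti : Antitone Gc := antitone_nat_of_succ_le fun n v hv => hbdec n hv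
  have hF0 : Fc 0 = ⊤ := by
    rw [eq_top_iff]
    intro v _
    show sec v ∈ Submodule.restrictScalars K (a 0)
    rw [ha0]; trivial
  have hG0 : Gc 0 = ⊤ := by
    rw [eq_top_iff]
    intro v _
    show sec v ∈ Submodule.restrictScalars K (b 0)
    rw [hb0]; trivial
  have haanti : Antitone a := antitone_nat_of_succ_le hadec
  have hFbot : ∃ M, ∀ r, M ≤ r → Fc r = ⊥ := by
    refine ⟨m₀, fun r hr => ?_⟩
    rw [eq_bot_iff]
    intro v hv
    have h1 : sec v ∈ a m₀ := haanti hr hv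
    have h0 : π (sec v) = 0 := by
      rw [hπapp]
      exact (Ideal.Quotient.eq_zero_iff_mem).mpr h1
    rw [hsec v] at h0
    simpa using h0
  -- the chain `Gc` stabilizes
  obtain ⟨T, hT⟩ : ∃ T, ∀ s, T ≤ s → Gc s = Gc T := by
    have hne : (Set.range fun s => finrank K (Gc s)).Nonempty := ⟨_, ⟨0, rfl⟩⟩
    obtain ⟨T, hTeq⟩ := Nat.sInf_mem hne
    refine ⟨T, fun s hs => ?_⟩
    refine Submodule.eq_of_le_of_finrank_le (hGanti hs) ?_
    have h1 : finrank K (Gc T) = sInf (Set.range fun s => finrank K (Gc s)) := hTeq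
    rw [h1]
    exact Nat.sInf_le ⟨s, rfl⟩
  set Gt : ℕ → Submodule K V := fun s => if s ≤ T then Gc s else ⊥ with hGt
  have hGtanti : Antitone Gt := by
    refine antitone_nat_of_succ_le fun n => ?_
    by_cases h : n + 1 ≤ T
    · rw [hGt]
      simp only [if_pos h, if_pos (by omega : n ≤ T)]
      exact hGanti (Nat.le_succ n)
    · rw [hGt]
      simp only [if_neg h]
      exact bot_le
  have hGt0 : Gt 0 = ⊤ := by
    rw [hGt]
    simp only [if_pos (Nat.zero_le T)]
    exact hG0
  have hGtbot : ∃ M, ∀ r, M ≤ r → Gt r = ⊥ :=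
    ⟨T + 1, fun r hr => by rw [hGt]; simp only [if_neg (by omega : ¬ r ≤ T)]⟩
  obtain ⟨N, bas, hFad, hGtad⟩ :=
    core_aux K (finrank K V) V inferInstance inferInstance inferInstance rfl
      Fc Gt hFanti hGtanti hF0 hGt0 hFbot hGtbot
  have hGad : ∀ s, Gc s ≤ Submodule.span K (↑bas '' {k | bas k ∈ Gc s}) := by
    intro s
    rcases le_or_gt s T with h | h
    · have heq : Gt s = Gc s := by rw [hGt]; simp [if_pos h]
      have h' := hGtad s
      rwa [heq] at h'
    · have h1 : Gc s = Gc T := hT s (le_of_lt h)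
      have h2 : Gt T = Gc T := by rw [hGt]; simp
      have h' := hGtad T
      rw [h2] at h'
      rw [h1]
      exact h'
  refine ⟨N, fun i => sec (bas i), bas, ?_, ?_, ?_⟩
  · intro i
    exact ((hπapp _).symm.trans (hsec _)).symm
  · intro r
    set φ : V →ₗ[K] R ⧸ a r := ((Ideal.Quotient.mkₐ K (a r)).toLinearMap).comp sec with hφ
    have hker : LinearMap.ker φ = Fc r := by
      ext v
      simp only [hφ, LinearMap.mem_ker, LinearMap.comp_apply, AlgHom.toLinearMap_apply,
        Ideal.Quotient.mkₐ_eq_mk, Ideal.Quotient.eq_zero_iff_mem]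
      exact (hFmem r v).symm
    have h := indep_helper bas φ (by rw [hker]; exact hFad r)
    exact h
  · intro r
    set φ : V →ₗ[K] R ⧸ b r := ((Ideal.Quotient.mkₐ K (b r)).toLinearMap).comp sec with hφ
    have hker : LinearMap.ker φ = Gc r := by
      ext v
      simp only [hφ, LinearMap.mem_ker, LinearMap.comp_apply, AlgHom.toLinearMap_apply,
        Ideal.Quotient.mkₐ_eq_mk, Ideal.Quotient.eq_zero_iff_mem]
      exact (hGmem r v).symm
    have h := indep_helper bas φ (by rw [hker]; exact hGad r)
    exact h
end

section
/- Let a_• and b_• be two graded sequences of ideals in a commutative ring R. Define c_m = Σ_{i=0}^m (a_i ∩ b_{m-i}). Then c_• is again a graded sequence of ideals, i.e., c_i · c_j ⊆ c_{i+j} for all i, j ∈ ℕ. -/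
lemma ideal_sum_le {R : Type*} [CommRing R] {ι : Type*} (s : Finset ι)
    (f : ι → Ideal R) (I : Ideal R) (h : ∀ x ∈ s, f x ≤ I) : ∑ x ∈ s, f x ≤ I := by
  classical
  induction s using Finset.induction with
  | empty => simp
  | insert _ _ hx ih =>
    rw [Finset.sum_insert hx, Submodule.add_eq_sup, sup_le_iff]
    exact ⟨h _ (Finset.mem_insert_self _ _), ih fun x hxs => h x (Finset.mem_insert_of_mem hxs)⟩

/-- The box-sum `c_m = Σ_{i=0}^m (a_i ⊓ b_{m-i})` of two graded sequences of ideals is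
again a graded sequence of ideals. -/
theorem boxsum_graded (R : Type*) [CommRing R] (a b : ℕ → Ideal R)
    (ha0 : a 0 = ⊤) (hb0 : b 0 = ⊤)
    (hagr : ∀ i j, a i * a j ≤ a (i + j)) (hbgr : ∀ i j, b i * b j ≤ b (i + j))
    (c : ℕ → Ideal R)
    (hc : ∀ m, c m = ∑ i ∈ Finset.range (m + 1), a i ⊓ b (m - i)) :
    c 0 = ⊤ ∧ ∀ i j, c i * c j ≤ c (i + j) := by
  constructor
  · rw [hc 0]; simp [ha0, hb0]
  · intro i j
    rw [hc i, hc j, Finset.sum_mul_sum]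
    apply ideal_sum_le
    intro p hp
    apply ideal_sum_le
    intro q hq
    rw [Finset.mem_range, Nat.lt_succ_iff] at hp hq
    have h1 : (a p ⊓ b (i - p)) * (a q ⊓ b (j - q)) ≤ a (p + q) := by
      calc (a p ⊓ b (i - p)) * (a q ⊓ b (j - q)) ≤ a p * a q :=
            Ideal.mul_mono inf_le_left inf_le_left
        _ ≤ a (p + q) := hagr p q
    have h2 : (a p ⊓ b (i - p)) * (a q ⊓ b (j - q)) ≤ b (i + j - (p + q)) := by
      calc (a p ⊓ b (i - p)) * (a q ⊓ b (j - q)) ≤ b (i - p) * b (j - q) :=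
            Ideal.mul_mono inf_le_right inf_le_right
        _ ≤ b ((i - p) + (j - q)) := hbgr _ _
        _ = b (i + j - (p + q)) := by congr 1; omega
    have hmem : p + q ∈ Finset.range (i + j + 1) := by
      rw [Finset.mem_range]; omega
    calc (a p ⊓ b (i - p)) * (a q ⊓ b (j - q)) ≤ a (p + q) ⊓ b (i + j - (p + q)) :=
          le_inf h1 h2
      _ ≤ ∑ k ∈ Finset.range (i + j + 1), a k ⊓ b (i + j - k) :=
          Finset.single_le_sum (f := fun k => a k ⊓ b (i + j - k))
            (fun k _ => bot_le) hmem
      _ = c (i + j) := (hc (i + j)).symm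
end

section
/- Let v_0, v_1 be valuations on a Noetherian local ring (R,m) centered at m, with valuation ideals a_r(v_i) of finite colength. Set b_r = a_r(v_0) ∩ a_r(v_1) and assume the multiplicities mult(v_0) = lim ℓ(R/a_r(v_0))/(r^n/n!), mult(v_1), and mult(b_•) = lim ℓ(R/b_r)/(r^n/n!) all exist. If mult(v_0) = mult(v_1) = mult(b_•) > 0, and if there exist f with v_0(f) > v_1(f) and g with v_1(g) > v_0(g) > 0, then one reaches a contradiction: (ℓ_0+1)^n(mult(b_•)−mult(v_0)) + (ℓ_2+2)^n(mult(b_•)−mult(v_1)) ≥ (2^n−1)·mult(b_•) > 0 for suitable ℓ_0, ℓ_2, which is impossible. Hence v_0(f) = v_1(f) for all f ∈ R whenever also every pair of values can be compared (i.e., v_0 = v_1). -/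
open Module Filter

section VolHelpers

open Function LinearMap

variable {K : Type*} [Field K]

private theorem VolAux.exists_surj_factor {M V₁ V₂ : Type*} [AddCommGroup M] [Module K M]
    [AddCommGroup V₁] [Module K V₁] [AddCommGroup V₂] [Module K V₂]
    (f : M →ₗ[K] V₁) (g : M →ₗ[K] V₂) (hf : Surjective f) (hg : Surjective g)
    (hle : ker f ≤ ker g) : ∃ u : V₁ →ₗ[K] V₂, Surjective u := by
  refine ⟨((ker f).liftQ g hle).comp (f.quotKerEquivOfSurjective hf).symm.toLinearMap, ?_⟩
  have h1 : Surjective ((ker f).liftQ g hle) := by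
    intro y
    obtain ⟨x, rfl⟩ := hg y
    exact ⟨Submodule.Quotient.mk x, Submodule.liftQ_apply _ _ _⟩
  simpa [LinearMap.coe_comp] using
    h1.comp (f.quotKerEquivOfSurjective hf).symm.surjective

private theorem VolAux.finrank_le_of_factor {M V₁ V₂ : Type*} [AddCommGroup M] [Module K M]
    [AddCommGroup V₁] [Module K V₁] [AddCommGroup V₂] [Module K V₂]
    (f : M →ₗ[K] V₁) (g : M →ₗ[K] V₂) (hf : Surjective f) (hg : Surjective g)
    (hle : ker f ≤ ker g) [FiniteDimensional K V₁] :
    finrank K V₂ ≤ finrank K V₁ := by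
  obtain ⟨u, hu⟩ := VolAux.exists_surj_factor f g hf hg hle
  exact Module.finrank_le_finrank_of_rank_le_rank
    (u.lift_rank_le_of_surjective hu) (Module.rank_lt_aleph0 K V₁)

private theorem VolAux.core_finrank {R : Type*} [CommRing R] [Algebra K R]
    {b I J : Ideal R} [FiniteDimensional K (R ⧸ b)]
    (hbI : b ≤ I) (z : R) (hzI : z ∈ I)
    (hker : ∀ x : R, z * x ∈ b → x ∈ J) :
    finrank K (R ⧸ I) + finrank K (R ⧸ J) ≤ finrank K (R ⧸ b) := by
  classical
  set mkb : R →ₗ[K] R ⧸ b := (Ideal.Quotient.mkₐ K b).toLinearMap with hmkbdef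
  have hmkb : Surjective mkb := fun y => Ideal.Quotient.mk_surjective y
  set φ : R →ₗ[K] R ⧸ b := mkb.comp (LinearMap.mulLeft K z) with hφdef
  have hφ_apply : ∀ x : R, φ x = Ideal.Quotient.mk b (z * x) := by
    intro x; rfl
  set W : Submodule K (R ⧸ b) := LinearMap.range φ with hWdef
  have hdim : finrank K ((R ⧸ b) ⧸ W) + finrank K W = finrank K (R ⧸ b) :=
    Submodule.finrank_quotient_add_finrank W
  have h2 : finrank K (R ⧸ J) ≤ finrank K W := by
    refine VolAux.finrank_le_of_factor φ.rangeRestrict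
      ((Ideal.Quotient.mkₐ K J).toLinearMap)
      φ.surjective_rangeRestrict (fun y => Ideal.Quotient.mk_surjective y) ?_
    intro x hx
    have hx0 : φ x = 0 := by
      rw [LinearMap.ker_rangeRestrict] at hx
      exact hx
    have hzx : z * x ∈ b := by
      rwa [hφ_apply, Ideal.Quotient.eq_zero_iff_mem] at hx0
    have hxJ : x ∈ J := hker x hzx
    show (Ideal.Quotient.mkₐ K J).toLinearMap x = 0
    simpa [Ideal.Quotient.eq_zero_iff_mem] using hxJ
  have h1 : finrank K (R ⧸ I) ≤ finrank K ((R ⧸ b) ⧸ W) := by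
    refine VolAux.finrank_le_of_factor (W.mkQ.comp mkb)
      ((Ideal.Quotient.mkₐ K I).toLinearMap)
      ((W.mkQ_surjective).comp hmkb) (fun y => Ideal.Quotient.mk_surjective y) ?_
    intro x hx
    rw [LinearMap.mem_ker, LinearMap.comp_apply] at hx
    have hxW : mkb x ∈ W := by
      rwa [Submodule.mkQ_apply, Submodule.Quotient.mk_eq_zero] at hx
    obtain ⟨c, hc⟩ := hxW
    have hsub : x - z * c ∈ b := by
      have hcc : Ideal.Quotient.mk b x = Ideal.Quotient.mk b (z * c) := by
        rw [← hφ_apply]; exact hc.symm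
      exact (Ideal.Quotient.mk_eq_mk_iff_sub_mem x (z * c)).mp hcc
    have hxI : x ∈ I := by
      have hx' : x = (x - z * c) + z * c := by ring
      rw [hx']
      exact I.add_mem (hbI hsub) (I.mul_mem_right c hzI)
    show (Ideal.Quotient.mkₐ K I).toLinearMap x = 0
    simpa [Ideal.Quotient.eq_zero_iff_mem] using hxI
  omega

end VolHelpers

private theorem VolAux.val_pow_ge {R : Type*} [CommRing R] (v : R → EReal)
    (hmul : ∀ x y : R, v (x * y) = v x + v y) (h : R) (p : ℕ)
    (hv : (p : EReal) ≤ v h) :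
    ∀ N : ℕ, 1 ≤ N → ((p * N : ℕ) : EReal) ≤ v (h ^ N) := by
  intro N hN
  obtain ⟨k, rfl⟩ : ∃ k, N = k + 1 := ⟨N - 1, by omega⟩
  clear hN
  induction k with
  | zero => simpa using hv
  | succ j ih =>
    have hstep : v (h ^ (j + 1 + 1)) = v (h ^ (j + 1)) + v h := by rw [pow_succ, hmul]
    have hcast : ((p * (j + 1 + 1) : ℕ) : EReal)
        = ((p * (j + 1) : ℕ) : EReal) + ((p : ℕ) : EReal) := by
      rw [← Nat.cast_add, Nat.mul_succ]
    rw [hstep, hcast]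
    exact add_le_add ih hv

private theorem VolAux.val_pow_le {R : Type*} [CommRing R] (v : R → EReal)
    (hmul : ∀ x y : R, v (x * y) = v x + v y) (h : R) (p : ℕ)
    (hv : v h ≤ (p : EReal)) :
    ∀ N : ℕ, 1 ≤ N → v (h ^ N) ≤ ((p * N : ℕ) : EReal) := by
  intro N hN
  obtain ⟨k, rfl⟩ : ∃ k, N = k + 1 := ⟨N - 1, by omega⟩
  clear hN
  induction k with
  | zero => simpa using hv
  | succ j ih =>
    have hstep : v (h ^ (j + 1 + 1)) = v (h ^ (j + 1)) + v h := by rw [pow_succ, hmul]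
    have hcast : ((p * (j + 1 + 1) : ℕ) : EReal)
        = ((p * (j + 1) : ℕ) : EReal) + ((p : ℕ) : EReal) := by
      rw [← Nat.cast_add, Nat.mul_succ]
    rw [hstep, hcast]
    exact add_le_add ih hv

private theorem VolAux.val_pow_eq {R : Type*} [CommRing R] (v : R → EReal)
    (hmul : ∀ x y : R, v (x * y) = v x + v y) (h : R) (c : ℝ)
    (hc : v h = (c : EReal)) :
    ∀ N : ℕ, 1 ≤ N → v (h ^ N) = (((N : ℝ) * c : ℝ) : EReal) := by
  intro N hN
  obtain ⟨k, rfl⟩ : ∃ k, N = k + 1 := ⟨N - 1, by omega⟩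
  clear hN
  induction k with
  | zero => simp [hc]
  | succ j ih =>
    have hstep : v (h ^ (j + 1 + 1)) = v (h ^ (j + 1)) + v h := by rw [pow_succ, hmul]
    rw [hstep, ih, hc, ← EReal.coe_add]
    congr 1
    push_cast
    ring

private theorem VolAux.ereal_cancel {a b : ℕ} {x : EReal}
    (h : ((a + b : ℕ) : EReal) ≤ ((b : ℕ) : EReal) + x) : (a : EReal) ≤ x := by
  induction x using EReal.rec with
  | bot =>
    rw [EReal.add_bot, le_bot_iff] at h
    exact absurd h (EReal.natCast_ne_bot _)
  | coe y =>
    rw [← EReal.coe_coe_eq_natCast, ← EReal.coe_coe_eq_natCast, ← EReal.coe_add,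
      EReal.coe_le_coe_iff] at h
    rw [← EReal.coe_coe_eq_natCast, EReal.coe_le_coe_iff]
    push_cast at h
    linarith
  | top => exact le_top

/-- The main analytic step: given an element `h` with `v₁ h ≤ q < q + 1 ≤ v₀ h`,
the three equal multiplicities yield a contradiction. -/
private theorem VolAux.main {K R : Type*} [Field K] [CommRing R] [Algebra K R]
    (n : ℕ)
    (v₀ v₁ : R → EReal)
    (hmul₀ : ∀ x y : R, v₀ (x * y) = v₀ x + v₀ y)
    (hmul₁ : ∀ x y : R, v₁ (x * y) = v₁ x + v₁ y)
    (A B : ℕ → Ideal R)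
    (hA : ∀ r : ℕ, ∀ g : R, g ∈ A r ↔ (r : EReal) ≤ v₀ g)
    (hB : ∀ r : ℕ, ∀ g : R, g ∈ B r ↔ (r : EReal) ≤ v₁ g)
    (hfin : ∀ r s : ℕ, FiniteDimensional K (R ⧸ (A r ⊓ B s)))
    (M : ℝ) (hM : 0 < M)
    (hmultA : Tendsto (fun r : ℕ =>
      (finrank K (R ⧸ A r) : ℝ) / (r ^ n / n.factorial)) atTop (nhds M))
    (hmultB : Tendsto (fun r : ℕ =>
      (finrank K (R ⧸ B r) : ℝ) / (r ^ n / n.factorial)) atTop (nhds M))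
    (hmultb : Tendsto (fun r : ℕ =>
      (finrank K (R ⧸ (A r ⊓ B r)) : ℝ) / (r ^ n / n.factorial)) atTop (nhds M))
    (h : R) (h1 : 0 < v₁ h) (h2 : v₁ h < v₀ h) : False := by
  -- Step 1: produce `H` and `q` with `v₁ H ≤ q` and `q + 1 ≤ v₀ H`.
  have hne_top : v₁ h ≠ ⊤ := (lt_of_lt_of_le h2 le_top).ne
  have hne_bot : v₁ h ≠ ⊥ := ne_bot_of_gt h1
  set β := (v₁ h).toReal with hβdef
  have hβ : v₁ h = (β : EReal) := (EReal.coe_toReal hne_top hne_bot).symm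
  obtain ⟨H, q, hHq, hHp⟩ : ∃ (H : R) (q : ℕ),
      v₁ H ≤ (q : EReal) ∧ ((q + 1 : ℕ) : EReal) ≤ v₀ H := by
    rcases eq_or_ne (v₀ h) ⊤ with htop | htop
    · refine ⟨h, ⌈β⌉₊, ?_, by rw [htop]; exact le_top⟩
      rw [hβ, ← EReal.coe_coe_eq_natCast]
      exact EReal.coe_le_coe_iff.mpr (Nat.le_ceil β)
    · have hv0_ne_bot : v₀ h ≠ ⊥ := ne_bot_of_gt (h1.trans h2)
      set α := (v₀ h).toReal with hαdef
      have hα : v₀ h = (α : EReal) := (EReal.coe_toReal htop hv0_ne_bot).symm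
      have hαβ : β < α := by
        rw [hβ, hα] at h2; exact EReal.coe_lt_coe_iff.mp h2
      have hβ0 : 0 ≤ β := by
        rw [hβ] at h1
        exact le_of_lt (EReal.coe_pos.mp h1)
      set N := max 1 ⌈2 / (α - β)⌉₊ with hNdef
      have hN1 : 1 ≤ N := le_max_left _ _
      have hN2 : 2 ≤ (N : ℝ) * (α - β) := by
        have hpos : (0 : ℝ) < α - β := by linarith
        have hNge : 2 / (α - β) ≤ (N : ℝ) :=
          le_trans (Nat.le_ceil _) (Nat.cast_le.mpr (le_max_right _ _))
        calc (2 : ℝ) = (2 / (α - β)) * (α - β) := by field_simp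
          _ ≤ (N : ℝ) * (α - β) := mul_le_mul_of_nonneg_right hNge (le_of_lt hpos)
      refine ⟨h ^ N, ⌈(N : ℝ) * β⌉₊, ?_, ?_⟩
      · rw [VolAux.val_pow_eq v₁ hmul₁ h β hβ N hN1, ← EReal.coe_coe_eq_natCast]
        exact EReal.coe_le_coe_iff.mpr (Nat.le_ceil _)
      · rw [VolAux.val_pow_eq v₀ hmul₀ h α hα N hN1, ← EReal.coe_coe_eq_natCast]
        refine EReal.coe_le_coe_iff.mpr ?_
        have hceil : (⌈(N : ℝ) * β⌉₊ : ℝ) < (N : ℝ) * β + 1 :=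
          Nat.ceil_lt_add_one (by positivity)
        push_cast
        nlinarith
  -- Step 2: the key finrank inequality.
  have key : ∀ r : ℕ, 1 ≤ r →
      finrank K (R ⧸ A ((q + 1) * r)) + finrank K (R ⧸ B r) ≤
      finrank K (R ⧸ (A ((q + 1) * r) ⊓ B ((q + 1) * r))) := by
    intro r hr
    haveI := hfin ((q + 1) * r) ((q + 1) * r)
    refine VolAux.core_finrank inf_le_left (H ^ r) ?_ ?_
    · rw [hA]
      exact VolAux.val_pow_ge v₀ hmul₀ H (q + 1) hHp r hr
    · intro x hx
      rw [Submodule.mem_inf] at hx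
      have hx2 : (((q + 1) * r : ℕ) : EReal) ≤ v₁ (H ^ r) + v₁ x := by
        rw [← hmul₁]; exact (hB _ _).mp hx.2
      have hHr := VolAux.val_pow_le v₁ hmul₁ H q hHq r hr
      have h3 : ((r + q * r : ℕ) : EReal) ≤ ((q * r : ℕ) : EReal) + v₁ x := by
        rw [show (q + 1) * r = r + q * r from by ring] at hx2
        exact le_trans hx2 (add_le_add hHr le_rfl)
      exact (hB r x).mpr (VolAux.ereal_cancel h3)
  -- Step 3: pass to the limit.
  have hmono : Tendsto (fun r : ℕ => (q + 1) * r) atTop atTop := by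
    refine tendsto_atTop_mono (fun r => ?_) tendsto_id
    calc r = 1 * r := (one_mul r).symm
      _ ≤ (q + 1) * r := Nat.mul_le_mul_right r (by omega)
  have hA2 : Tendsto (fun r : ℕ =>
      (finrank K (R ⧸ A ((q + 1) * r)) : ℝ) /
        ((((q + 1) * r : ℕ) : ℝ) ^ n / n.factorial)) atTop (nhds M) :=
    hmultA.comp hmono
  have hu2 : Tendsto (fun r : ℕ =>
      (finrank K (R ⧸ (A ((q + 1) * r) ⊓ B ((q + 1) * r))) : ℝ) /
        ((((q + 1) * r : ℕ) : ℝ) ^ n / n.factorial)) atTop (nhds M) :=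
    hmultb.comp hmono
  have hcpos : (0 : ℝ) < (((q + 1 : ℕ) : ℝ)) ^ n := by positivity
  have hB2 : Tendsto (fun r : ℕ =>
      (finrank K (R ⧸ B r) : ℝ) /
        ((((q + 1) * r : ℕ) : ℝ) ^ n / n.factorial)) atTop
      (nhds (M / (((q + 1 : ℕ) : ℝ)) ^ n)) := by
    refine (hmultB.div_const ((((q + 1 : ℕ) : ℝ)) ^ n)).congr (fun r => ?_)
    rw [div_div]
    congr 1
    rw [Nat.cast_mul, mul_pow]
    ring
  have hev : ∀ᶠ r : ℕ in atTop,
      (fun r : ℕ => (finrank K (R ⧸ A ((q + 1) * r)) : ℝ) /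
        ((((q + 1) * r : ℕ) : ℝ) ^ n / n.factorial)) r +
      (fun r : ℕ => (finrank K (R ⧸ B r) : ℝ) /
        ((((q + 1) * r : ℕ) : ℝ) ^ n / n.factorial)) r ≤
      (fun r : ℕ => (finrank K (R ⧸ (A ((q + 1) * r) ⊓ B ((q + 1) * r))) : ℝ) /
        ((((q + 1) * r : ℕ) : ℝ) ^ n / n.factorial)) r := by
    filter_upwards [eventually_ge_atTop 1] with r hr
    have hkey := key r hr
    have hDpos : (0 : ℝ) < ((((q + 1) * r : ℕ) : ℝ) ^ n / n.factorial) := by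
      have hb : (0 : ℝ) < (((q + 1) * r : ℕ) : ℝ) := by
        have : 0 < (q + 1) * r := Nat.mul_pos (by omega) (by omega)
        exact_mod_cast this
      have hf : (0 : ℝ) < (n.factorial : ℝ) := by
        exact_mod_cast n.factorial_pos
      positivity
    rw [← add_div]
    gcongr
    exact_mod_cast hkey
  have hle : M + M / (((q + 1 : ℕ) : ℝ)) ^ n ≤ M :=
    le_of_tendsto_of_tendsto (hA2.add hB2) hu2 hev
  have : 0 < M / (((q + 1 : ℕ) : ℝ)) ^ n := div_pos hM hcpos
  linarith

/-- Lemma 3.10: two centered valuations whose volumes both equal the multiplicity of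
the intersection `b_r = a_r(v₀) ∩ a_r(v₁)` of their valuation ideal sequences (all
positive) must coincide.  The auxiliary hypothesis `hLX` is [LX20, Prop. 2.7]: if the
valuations differ, there is an element on which one of them is strictly bigger while
the other is still positive (stated symmetrically). -/
theorem valuations_equal_of_equal_multiplicities
    (K R : Type*) [Field K] [CommRing R] [Algebra K R] [IsLocalRing R]
    [IsNoetherianRing R]
    (n : ℕ) (hn : 1 ≤ n)
    (v₀ v₁ : R → EReal)
    (hv₀0 : v₀ 0 = ⊤) (hv₁0 : v₁ 0 = ⊤)
    (hadd₀ : ∀ x y : R, min (v₀ x) (v₀ y) ≤ v₀ (x + y))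
    (hadd₁ : ∀ x y : R, min (v₁ x) (v₁ y) ≤ v₁ (x + y))
    (hmul₀ : ∀ x y : R, v₀ (x * y) = v₀ x + v₀ y)
    (hmul₁ : ∀ x y : R, v₁ (x * y) = v₁ x + v₁ y)
    (hcent₀ : ∀ x : R, x ∈ IsLocalRing.maximalIdeal R ↔ 0 < v₀ x)
    (hcent₁ : ∀ x : R, x ∈ IsLocalRing.maximalIdeal R ↔ 0 < v₁ x)
    (A B : ℕ → Ideal R)
    (hA : ∀ r : ℕ, ∀ g : R, g ∈ A r ↔ (r : EReal) ≤ v₀ g)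
    (hB : ∀ r : ℕ, ∀ g : R, g ∈ B r ↔ (r : EReal) ≤ v₁ g)
    (hfin : ∀ r s : ℕ, FiniteDimensional K (R ⧸ (A r ⊓ B s)))
    (M : ℝ) (hM : 0 < M)
    (hmultA : Tendsto (fun r : ℕ =>
      (finrank K (R ⧸ A r) : ℝ) / (r ^ n / n.factorial)) atTop (nhds M))
    (hmultB : Tendsto (fun r : ℕ =>
      (finrank K (R ⧸ B r) : ℝ) / (r ^ n / n.factorial)) atTop (nhds M))
    (hmultb : Tendsto (fun r : ℕ =>
      (finrank K (R ⧸ (A r ⊓ B r)) : ℝ) / (r ^ n / n.factorial)) atTop (nhds M))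
    (hLX₀ : v₀ ≠ v₁ → (∃ f : R, v₁ f < v₀ f) →
      ∃ g : R, 0 < v₀ g ∧ v₀ g < v₁ g)
    (hLX₁ : v₀ ≠ v₁ → (∃ f : R, v₀ f < v₁ f) →
      ∃ g : R, 0 < v₁ g ∧ v₁ g < v₀ g) :
    v₀ = v₁ := by
  by_contra hne
  obtain ⟨f, hf⟩ := Function.ne_iff.mp hne
  rcases Ne.lt_or_gt hf with hlt | hlt
  · -- v₀ f < v₁ f : get g with 0 < v₁ g < v₀ g
    obtain ⟨g, hg1, hg2⟩ := hLX₁ hne ⟨f, hlt⟩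
    exact VolAux.main n v₀ v₁ hmul₀ hmul₁ A B hA hB hfin M hM
      hmultA hmultB hmultb g hg1 hg2
  · -- v₁ f < v₀ f : get g with 0 < v₀ g < v₁ g ; swap the roles
    obtain ⟨g, hg1, hg2⟩ := hLX₀ hne ⟨f, hlt⟩
    have hfin' : ∀ r s : ℕ, FiniteDimensional K (R ⧸ (B r ⊓ A s)) := by
      intro r s
      rw [inf_comm]
      exact hfin s r
    have hmultb' : Tendsto (fun r : ℕ =>
        (finrank K (R ⧸ (B r ⊓ A r)) : ℝ) / (r ^ n / n.factorial)) atTop (nhds M) := by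
      have hfun : (fun r : ℕ => (finrank K (R ⧸ (B r ⊓ A r)) : ℝ) / (r ^ n / n.factorial))
          = (fun r : ℕ => (finrank K (R ⧸ (A r ⊓ B r)) : ℝ) / (r ^ n / n.factorial)) := by
        funext r
        rw [inf_comm]
      rw [hfun]
      exact hmultb
    exact VolAux.main n v₁ v₀ hmul₁ hmul₀ B A hB hA hfin' M hM
      hmultB hmultA hmultb' g hg1 hg2
end
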